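/- Canonical form of a rotational Killing vector: if A, C ∈ ℝ³ satisfy C ≠ 0 and ⟨A, C⟩ = 0 (i.e. Δ₁ ≠ 0, Δ₂ = 0), then there exist λ ∈ SO(3) and δ ∈ ℝ³ such that λᵀ(A + δ × C) = 0 and λᵀC = (0, 0, ‖C‖); consequently λᵀ V_{A,C}(λ x̃ + δ) = x̃ × (‖C‖·e₃) for all x̃ ∈ ℝ³, with ‖C‖ ≠ 0. In particular, the equation δ × C = −A is solvable for δ precisely because ⟨A, C⟩ = 0 and C ≠ 0. -/

import Mathlib

open Matrix

/-- 3×3 real matrices. -/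
abbrev M3 := Matrix (Fin 3) (Fin 3) ℝ

/-- Membership in SO(3). -/
def SO3 (l : M3) : Prop := lᵀ * l = 1 ∧ l.det = 1

/-- The Killing vector field `V_{A,C}(x) = A + x × C`. -/
def VAC (A C : Fin 3 → ℝ) (x : Fin 3 → ℝ) : Fin 3 → ℝ :=
  A + crossProduct x C

/-- Key polynomial identity: `Mᵀ ((Mu) × (Mv)) = det M • (u × v)`. -/
lemma cross_key (M : M3) (u v : Fin 3 → ℝ) :
    Mᵀ.mulVec (crossProduct (M.mulVec u) (M.mulVec v)) = M.det • crossProduct u v := by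
  funext i
  fin_cases i <;>
  · simp [crossProduct, mulVec, dotProduct, Matrix.det_fin_three, Fin.sum_univ_three]
    ring

lemma pullback (A C : Fin 3 → ℝ) (l : M3) (δ : Fin 3 → ℝ) (hl : SO3 l)
    (h1 : crossProduct δ C = -A) (w : Fin 3 → ℝ) (h2 : lᵀ.mulVec C = w)
    (xt : Fin 3 → ℝ) :
    lᵀ.mulVec (VAC A C (l.mulVec xt + δ)) = crossProduct xt w := by
  have hllt : l * lᵀ = 1 := mul_eq_one_comm.mp hl.1
  have hC : l.mulVec (lᵀ.mulVec C) = C := by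
    rw [Matrix.mulVec_mulVec, hllt, Matrix.one_mulVec]
  have : VAC A C (l.mulVec xt + δ) = crossProduct (l.mulVec xt) C := by
    unfold VAC
    rw [map_add, LinearMap.add_apply, h1]
    abel
  rw [this, ← hC, cross_key, hl.2, h2]
  simp

set_option maxHeartbeats 1000000 in
lemma generic_SO3 (C : Fin 3 → ℝ) (s n : ℝ) (hs0 : 0 < s) (hn0 : 0 < n)
    (hA : s ^ 2 = C 0 ^ 2 + C 1 ^ 2) (hB : n ^ 2 = s ^ 2 + C 2 ^ 2) :
    ∃ l : Matrix (Fin 3) (Fin 3) ℝ,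
      lᵀ * l = 1 ∧ l.det = 1 ∧ lᵀ.mulVec C = ![0, 0, n] := by
  have hs := hs0.ne'
  have hn := hn0.ne'
  refine ⟨Matrix.of ![![C 0 * C 2 / (s * n), -(C 1) / s, C 0 / n],
       ![C 1 * C 2 / (s * n), C 0 / s, C 1 / n],
       ![-s / n, 0, C 2 / n]], ?_, ?_, ?_⟩
  · ext i j
    fin_cases i <;> fin_cases j <;>
      simp [Matrix.mul_apply, Fin.sum_univ_three, Matrix.one_apply, Matrix.vecHead,
        Matrix.vecTail] <;>
      field_simp <;> ring_nf <;>
      first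
        | linear_combination (-(C 2^2)) * hA - s^2 * hB
        | linear_combination (-(C 2)) * hA
        | linear_combination (-(C 2^2*n^2)) * hA - s^2*n^2 * hB
        | linear_combination (-(C 2*n^2)) * hA
        | linear_combination -hA
        | linear_combination -hA - hB
  · rw [Matrix.det_fin_three]
    simp
    field_simp
    ring_nf
    linear_combination (-(C 2^2+s^2)) * hA - s^2 * hB
  · funext i
    fin_cases i <;>
      simp [Matrix.mulVec, dotProduct, Fin.sum_univ_three, Matrix.vecHead, Matrix.vecTail] <;>
      field_simp <;> ring_nf <;>
      first
        | linear_combination (-(C 2)) * hA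
        | linear_combination (-(C 2*n)) * hA
        | linear_combination -hA - hB

lemma degen_SO3 (C : Fin 3 → ℝ) (n : ℝ) (hn0 : 0 < n)
    (h0 : C 0 = 0) (h1 : C 1 = 0) (hB : n ^ 2 = C 2 ^ 2) :
    ∃ l : Matrix (Fin 3) (Fin 3) ℝ,
      lᵀ * l = 1 ∧ l.det = 1 ∧ lᵀ.mulVec C = ![0, 0, n] := by
  have hn := hn0.ne'
  refine ⟨Matrix.of ![![C 2 / n, 0, 0], ![0, 1, 0], ![0, 0, C 2 / n]], ?_, ?_, ?_⟩
  · ext i j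
    fin_cases i <;> fin_cases j <;>
      simp [Matrix.mul_apply, Fin.sum_univ_three, Matrix.one_apply, Matrix.vecHead,
        Matrix.vecTail] <;>
      first
        | rfl
        | (field_simp; ring_nf; linear_combination -hB)
  · rw [Matrix.det_fin_three]
    simp
    field_simp
    ring_nf
    linear_combination -hB
  · funext i
    fin_cases i <;>
      simp [Matrix.mulVec, dotProduct, Fin.sum_univ_three, h0, h1, Matrix.vecHead,
        Matrix.vecTail] <;>
      first
        | rfl
        | (field_simp; ring_nf; linear_combination -hB)

/-- STATEMENT 6: canonical form of a rotational Killing vector: if `C ≠ 0` and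
`⟨A,C⟩ = 0`, there are `λ ∈ SO(3)` and `δ ∈ ℝ³` with `λᵀ(A + δ × C) = 0` and
`λᵀC = (0,0,‖C‖)`, so the pulled-back field is `x̃ × (‖C‖ e₃)` with `‖C‖ ≠ 0`;
in particular `δ × C = −A` is solvable for `δ`. -/
theorem rotational_Killing_vector_canonical_form
    (A C : Fin 3 → ℝ) (hC : C ≠ 0) (hAC : A ⬝ᵥ C = 0) :
    (∃ (l : M3) (δ : Fin 3 → ℝ), SO3 l ∧
      lᵀ.mulVec (A + crossProduct δ C) = 0 ∧
      lᵀ.mulVec C = ![0, 0, Real.sqrt (C ⬝ᵥ C)] ∧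
      (∀ xt : Fin 3 → ℝ,
        lᵀ.mulVec (VAC A C (l.mulVec xt + δ)) =
          crossProduct xt ![0, 0, Real.sqrt (C ⬝ᵥ C)]) ∧
      Real.sqrt (C ⬝ᵥ C) ≠ 0) ∧
    ∃ δ : Fin 3 → ℝ, crossProduct δ C = -A := by
  have hdd : C ⬝ᵥ C = C 0 ^ 2 + C 1 ^ 2 + C 2 ^ 2 := by
    simp [dotProduct, Fin.sum_univ_three]; ring
  have hd0 : 0 < C ⬝ᵥ C := by
    rcases Function.ne_iff.mp hC with ⟨i, hi⟩
    rw [hdd]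
    fin_cases i <;> simp at hi <;>
      nlinarith [sq_nonneg (C 0), sq_nonneg (C 1), sq_nonneg (C 2),
        mul_self_pos.mpr hi]
  set n := Real.sqrt (C ⬝ᵥ C) with hn
  have hn0 : 0 < n := Real.sqrt_pos.mpr hd0
  have hn2 : n ^ 2 = C 0 ^ 2 + C 1 ^ 2 + C 2 ^ 2 := by
    rw [hn, Real.sq_sqrt hd0.le, hdd]
  set δ : Fin 3 → ℝ := (C ⬝ᵥ C)⁻¹ • crossProduct A C with hδdef
  have hδ : crossProduct δ C = -A := by
    have h : A 0 * C 0 + A 1 * C 1 + A 2 * C 2 = 0 := by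
      simpa [dotProduct, Fin.sum_univ_three] using hAC
    have hd' : C 0 * C 0 + C 1 * C 1 + C 2 * C 2 ≠ 0 := by
      intro hz
      rw [hdd] at hd0; nlinarith
    have hd2 : C 0 ^ 2 + C 1 ^ 2 + C 2 ^ 2 ≠ 0 := by rw [← hdd]; exact hd0.ne'
    rw [hδdef]
    funext i
    fin_cases i
    · simp [crossProduct, dotProduct, Fin.sum_univ_three]
      field_simp
      linear_combination (C 0) * h
    · simp [crossProduct, dotProduct, Fin.sum_univ_three]
      field_simp
      linear_combination (C 1) * h
    · simp [crossProduct, dotProduct, Fin.sum_univ_three]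
      field_simp
      linear_combination (C 2) * h
  obtain ⟨l, hl1, hl2, hcol⟩ :
      ∃ l : M3, lᵀ * l = 1 ∧ l.det = 1 ∧ lᵀ.mulVec C = ![0, 0, n] := by
    by_cases hgen : C 0 = 0 ∧ C 1 = 0
    · obtain ⟨h0, h1⟩ := hgen
      have hB : n ^ 2 = C 2 ^ 2 := by rw [hn2, h0, h1]; ring
      exact degen_SO3 C n hn0 h0 h1 hB
    · have hs0 : 0 < C 0 ^ 2 + C 1 ^ 2 := by
        rcases not_and_or.mp hgen with h | h <;> positivity
      have hs0' : 0 < Real.sqrt (C 0 ^ 2 + C 1 ^ 2) := Real.sqrt_pos.mpr hs0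
      have hs2 : Real.sqrt (C 0 ^ 2 + C 1 ^ 2) ^ 2 = C 0 ^ 2 + C 1 ^ 2 :=
        Real.sq_sqrt hs0.le
      have hB : n ^ 2 = Real.sqrt (C 0 ^ 2 + C 1 ^ 2) ^ 2 + C 2 ^ 2 := by
        rw [hs2]; exact hn2
      exact generic_SO3 C _ n hs0' hn0 hs2 hB
  have hl : SO3 l := ⟨hl1, hl2⟩
  refine ⟨⟨l, δ, hl, ?_, hcol, fun xt => pullback A C l δ hl hδ _ hcol xt, hn0.ne'⟩, δ, hδ⟩
  have hz : A + crossProduct δ C = 0 := by rw [hδ]; simp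
  rw [hz, Matrix.mulVec_zero]
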